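/- Let P be a substochastic matrix on a countable set Λ, U ⊆ Λ a finite nonempty set, and define the taboo matrix Q_U(x,y) := P(x,y)·1{y ∉ U}. Let ρ ∈ (0,1) and R ∈ (ρ, 1]. Assume that Σ_{y∈Λ} Q_U^n(x,y) ≤ ρ^n for all x ∈ Λ and n ≥ 1, and that G := sup_{n≥0} R^{−n} max_{u∈U} Σ_{z∈Λ} P^n(u,z) < ∞. Then for every x ∈ Λ, limsup_{n→∞} R^{−n} Σ_{y∈Λ} P^n(x,y) ≤ G/(R − ρ). (In Markov-chain language: if the chain enters U exponentially fast and the renormalized survival probability from U is bounded, then the renormalized survival probability from any state is bounded; this is the paper's upper bound on the right eigenvector μ(x) = lim_n R^{−n}P_x(τ_0 > n) in the proof of Theorem 2.3.) -/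

import Mathlib

open Filter Topology

/-- Powers of a matrix indexed by a countable set: `matPow P 0 = Id`,
`matPow P (n+1) x y = ∑ z, matPow P n x z * P z y`. -/
noncomputable def matPow {Λ : Type*} [DecidableEq Λ] (P : Λ → Λ → ℝ) : ℕ → Λ → Λ → ℝ
  | 0 => fun x y => if x = y then 1 else 0
  | n + 1 => fun x y => ∑' z, matPow P n x z * P z y

section aux
variable {Λ : Type*} [DecidableEq Λ] {P : Λ → Λ → ℝ}

lemma mp_nonneg (hP0 : ∀ x y, 0 ≤ P x y) : ∀ n x y, 0 ≤ matPow P n x y := by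
  intro n
  induction n with
  | zero => intro x y; simp only [matPow]; split <;> norm_num
  | succ n ih => intro x y; exact tsum_nonneg fun z => mul_nonneg (ih x z) (hP0 z y)

lemma mp_row (hP0 : ∀ x y, 0 ≤ P x y) (hPsum : ∀ x, Summable (P x))
    (hP1 : ∀ x, ∑' y, P x y ≤ 1) :
    ∀ n x, Summable (matPow P n x) ∧ ∑' y, matPow P n x y ≤ 1 := by
  intro n
  induction n with
  | zero =>
    intro x
    constructor
    · apply summable_of_ne_finset_zero (s := {x})
      intro b hb
      simp only [matPow]
      simp only [Finset.mem_singleton] at hb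
      rw [if_neg (fun h => hb h.symm)]
    · simp only [matPow]
      rw [tsum_eq_single x (fun b hb => by rw [if_neg (fun h => hb h.symm)])]
      simp
  | succ n ih =>
    intro x
    have hrow := (ih x).1
    have hrowle := (ih x).2
    have hinner : ∀ z, Summable fun y => matPow P n x z * P z y :=
      fun z => (hPsum z).mul_left _
    have hinner_sum : ∀ z, (∑' y, matPow P n x z * P z y) ≤ matPow P n x z := by
      intro z
      rw [tsum_mul_left]
      calc matPow P n x z * ∑' y, P z y ≤ matPow P n x z * 1 :=
            mul_le_mul_of_nonneg_left (hP1 z) (mp_nonneg hP0 n x z)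
        _ = matPow P n x z := mul_one _
    have houter : Summable fun z => ∑' y, matPow P n x z * P z y :=
      Summable.of_nonneg_of_le
        (fun z => tsum_nonneg fun y => mul_nonneg (mp_nonneg hP0 n x z) (hP0 z y))
        hinner_sum hrow
    have huncurry : Summable fun p : Λ × Λ => matPow P n x p.1 * P p.1 p.2 :=
      (summable_prod_of_nonneg fun p => mul_nonneg (mp_nonneg hP0 n x p.1) (hP0 p.1 p.2)).2
        ⟨hinner, houter⟩
    constructor
    · show Summable fun y => ∑' z, matPow P n x z * P z y
      exact ((summable_prod_of_nonneg (f := fun p : Λ × Λ => matPow P n x p.2 * P p.2 p.1)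
        (fun p => mul_nonneg (mp_nonneg hP0 n x p.2) (hP0 p.2 p.1))).1
        huncurry.prod_symm).2
    · show (∑' y, ∑' z, matPow P n x z * P z y) ≤ 1
      rw [Summable.tsum_comm (f := fun z y => matPow P n x z * P z y) huncurry]
      calc (∑' z, ∑' y, matPow P n x z * P z y) ≤ ∑' z, matPow P n x z :=
            Summable.tsum_le_tsum hinner_sum houter hrow
        _ ≤ 1 := hrowle
end aux

section aux2
variable {Λ : Type*} [DecidableEq Λ] {P : Λ → Λ → ℝ}

lemma P_le_one (hP0 : ∀ x y, 0 ≤ P x y) (hPsum : ∀ x, Summable (P x))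
    (hP1 : ∀ x, ∑' y, P x y ≤ 1) (z y : Λ) : P z y ≤ 1 :=
  le_trans (Summable.le_tsum (hPsum z) y fun b _ => hP0 z b) (hP1 z)

lemma mp_succ' (hP0 : ∀ x y, 0 ≤ P x y) (hPsum : ∀ x, Summable (P x))
    (hP1 : ∀ x, ∑' y, P x y ≤ 1) :
    ∀ n x y, matPow P (n + 1) x y = ∑' z, P x z * matPow P n z y := by
  intro n
  induction n with
  | zero =>
    intro x y
    show (∑' z, matPow P 0 x z * P z y) = _
    rw [tsum_eq_single x (fun b hb => by
      show matPow P 0 x b * P b y = 0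
      simp only [matPow]
      rw [if_neg (fun h => hb h.symm), zero_mul])]
    rw [tsum_eq_single y (fun b hb => by
      show P x b * matPow P 0 b y = 0
      simp only [matPow]
      rw [if_neg hb, mul_zero])]
    simp [matPow]
  | succ n ih =>
    intro x y
    have hmn : ∀ w, Summable fun z => matPow P n w z * P z y :=
      fun w => Summable.of_nonneg_of_le
        (fun z => mul_nonneg (mp_nonneg hP0 n w z) (hP0 z y))
        (fun z => by
          calc matPow P n w z * P z y ≤ matPow P n w z * 1 :=
                mul_le_mul_of_nonneg_left (P_le_one hP0 hPsum hP1 z y) (mp_nonneg hP0 n w z)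
            _ = matPow P n w z := mul_one _)
        ((mp_row hP0 hPsum hP1 n w).1)
    have hmn_sum : ∀ w, (∑' z, matPow P n w z * P z y) ≤ 1 := by
      intro w
      calc (∑' z, matPow P n w z * P z y) ≤ ∑' z, matPow P n w z :=
            Summable.tsum_le_tsum (fun z => by
              calc matPow P n w z * P z y ≤ matPow P n w z * 1 :=
                    mul_le_mul_of_nonneg_left (P_le_one hP0 hPsum hP1 z y) (mp_nonneg hP0 n w z)
                _ = matPow P n w z := mul_one _)
              (hmn w) ((mp_row hP0 hPsum hP1 n w).1)
        _ ≤ 1 := (mp_row hP0 hPsum hP1 n w).2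
    have hin : ∀ w, Summable fun z => P x w * (matPow P n w z * P z y) :=
      fun w => (hmn w).mul_left _
    have hout : Summable fun w => ∑' z, P x w * (matPow P n w z * P z y) :=
      Summable.of_nonneg_of_le
        (fun w => tsum_nonneg fun z =>
          mul_nonneg (hP0 x w) (mul_nonneg (mp_nonneg hP0 n w z) (hP0 z y)))
        (fun w => by
          rw [tsum_mul_left]
          calc P x w * ∑' z, matPow P n w z * P z y ≤ P x w * 1 :=
                mul_le_mul_of_nonneg_left (hmn_sum w) (hP0 x w)
            _ = P x w := mul_one _)
        (hPsum x)
    have huncurry : Summable fun p : Λ × Λ => P x p.1 * (matPow P n p.1 p.2 * P p.2 y) :=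
      (summable_prod_of_nonneg fun p =>
        mul_nonneg (hP0 x p.1) (mul_nonneg (mp_nonneg hP0 n p.1 p.2) (hP0 p.2 y))).2
        ⟨hin, hout⟩
    show (∑' z, matPow P (n + 1) x z * P z y) = ∑' w, P x w * matPow P (n + 1) w y
    calc (∑' z, matPow P (n + 1) x z * P z y)
        = ∑' z, (∑' w, P x w * matPow P n w z) * P z y := by
          congr 1; ext z; rw [ih x z]
      _ = ∑' z, ∑' w, P x w * (matPow P n w z * P z y) := by
          congr 1; ext z
          rw [← tsum_mul_right]
          exact tsum_congr fun w => by ring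
      _ = ∑' w, ∑' z, P x w * (matPow P n w z * P z y) :=
          Summable.tsum_comm (f := fun w z => P x w * (matPow P n w z * P z y)) huncurry
      _ = ∑' w, P x w * matPow P (n + 1) w y := by
          congr 1; ext w
          rw [tsum_mul_left]
          rfl

lemma rowSum_succ (hP0 : ∀ x y, 0 ≤ P x y) (hPsum : ∀ x, Summable (P x))
    (hP1 : ∀ x, ∑' y, P x y ≤ 1) (n : ℕ) (x : Λ) :
    (∑' y, matPow P (n + 1) x y) = ∑' z, P x z * ∑' y, matPow P n z y := by
  have hin : ∀ z, Summable fun y => P x z * matPow P n z y :=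
    fun z => ((mp_row hP0 hPsum hP1 n z).1).mul_left _
  have hout : Summable fun z => ∑' y, P x z * matPow P n z y :=
    Summable.of_nonneg_of_le
      (fun z => tsum_nonneg fun y => mul_nonneg (hP0 x z) (mp_nonneg hP0 n z y))
      (fun z => by
        rw [tsum_mul_left]
        calc P x z * ∑' y, matPow P n z y ≤ P x z * 1 :=
              mul_le_mul_of_nonneg_left ((mp_row hP0 hPsum hP1 n z).2) (hP0 x z)
          _ = P x z := mul_one _)
      (hPsum x)
  have huncurry : Summable fun p : Λ × Λ => P x p.1 * matPow P n p.1 p.2 :=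
    (summable_prod_of_nonneg fun p =>
      mul_nonneg (hP0 x p.1) (mp_nonneg hP0 n p.1 p.2)).2 ⟨hin, hout⟩
  calc (∑' y, matPow P (n + 1) x y) = ∑' y, ∑' z, P x z * matPow P n z y := by
        congr 1; ext y; exact mp_succ' hP0 hPsum hP1 n x y
    _ = ∑' z, ∑' y, P x z * matPow P n z y :=
        Summable.tsum_comm (f := fun z y => P x z * matPow P n z y) huncurry
    _ = ∑' z, P x z * ∑' y, matPow P n z y := by
        congr 1; ext z; rw [tsum_mul_left]
end aux2

section aux3
variable {Λ : Type*} [DecidableEq Λ]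

lemma mp_zero_row (P : Λ → Λ → ℝ) (x : Λ) : (∑' y, matPow P 0 x y) = 1 := by
  simp only [matPow]
  rw [tsum_eq_single x (fun b hb => by rw [if_neg (fun h => hb h.symm)])]
  simp
end aux3

/-- if the chain enters the finite set `U` exponentially fast
(row sums of the taboo matrix `Q_U` decay like `ρⁿ`) and the renormalized survival
probability from `U` is bounded by `G`, then the renormalized survival probability
from any state has `limsup` at most `G/(R−ρ)`. -/
theorem renormalized_survival_upper_bound
    {Λ : Type*} [Countable Λ] [DecidableEq Λ]
    (P : Λ → Λ → ℝ)
    -- substochastic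
    (hP0 : ∀ x y, 0 ≤ P x y)
    (hPsum : ∀ x, Summable (P x))
    (hP1 : ∀ x, ∑' y, P x y ≤ 1)
    (U : Finset Λ) (hUne : U.Nonempty)
    (ρ R G : ℝ) (hρ0 : 0 < ρ) (hρ1 : ρ < 1) (hρR : ρ < R) (hR1 : R ≤ 1)
    -- taboo row sums decay exponentially: Σ_y Q_U^n(x,y) ≤ ρ^n
    (htaboo : ∀ x, ∀ n : ℕ, 1 ≤ n →
      (∑' y, matPow (fun a b => if b ∈ U then 0 else P a b) n x y) ≤ ρ ^ n)
    -- G bounds the renormalized survival probability from U: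
    -- G = sup_{n≥0} R^{-n} max_{u∈U} Σ_z P^n(u,z) < ∞
    (hG : ∀ n : ℕ, ∀ u ∈ U, (∑' z, matPow P n u z) / R ^ n ≤ G) :
    ∀ x, Filter.limsup (fun n : ℕ => (∑' y, matPow P n x y) / R ^ n) atTop
      ≤ G / (R - ρ) := by
  have hR0 : (0:ℝ) < R := hρ0.trans hρR
  have hRρ : (0:ℝ) < R - ρ := sub_pos.2 hρR
  set Q : Λ → Λ → ℝ := fun a b => if b ∈ U then 0 else P a b with hQdef
  have hQ0 : ∀ a b, 0 ≤ Q a b := by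
    intro a b; simp only [hQdef]; split
    · norm_num
    · exact hP0 a b
  have hQle : ∀ a b, Q a b ≤ P a b := by
    intro a b; simp only [hQdef]; split
    · exact hP0 a b
    · exact le_rfl
  have hQsum : ∀ a, Summable (Q a) :=
    fun a => Summable.of_nonneg_of_le (hQ0 a) (hQle a) (hPsum a)
  have hQ1 : ∀ a, ∑' b, Q a b ≤ 1 :=
    fun a => le_trans (Summable.tsum_le_tsum (hQle a) (hQsum a) (hPsum a)) (hP1 a)
  -- abbreviations
  set S : ℕ → Λ → ℝ := fun n x => ∑' y, matPow P n x y with hSdef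
  set T : ℕ → Λ → ℝ := fun n x => ∑' y, matPow Q n x y with hTdef
  have hS0 : ∀ x, S 0 x = 1 := fun x => mp_zero_row P x
  have hT0 : ∀ x, T 0 x = 1 := fun x => mp_zero_row Q x
  have hSnn : ∀ n x, 0 ≤ S n x :=
    fun n x => tsum_nonneg fun y => mp_nonneg hP0 n x y
  have hTnn : ∀ n x, 0 ≤ T n x :=
    fun n x => tsum_nonneg fun y => mp_nonneg hQ0 n x y
  have hSle1 : ∀ n x, S n x ≤ 1 := fun n x => (mp_row hP0 hPsum hP1 n x).2
  have hTle1 : ∀ n x, T n x ≤ 1 := fun n x => (mp_row hQ0 hQsum hQ1 n x).2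
  have hSsucc : ∀ n x, S (n+1) x = ∑' z, P x z * S n z :=
    fun n x => rowSum_succ hP0 hPsum hP1 n x
  have hTsucc : ∀ n x, T (n+1) x = ∑' z, Q x z * T n z :=
    fun n x => rowSum_succ hQ0 hQsum hQ1 n x
  have hTρ : ∀ n x, T n x ≤ ρ ^ n := by
    intro n x
    rcases Nat.eq_zero_or_pos n with h | h
    · subst h; rw [hT0, pow_zero]
    · exact htaboo x n h
  have hGR : ∀ n, ∀ u ∈ U, S n u ≤ G * R ^ n := by
    intro n u hu
    have := hG n u hu
    rw [div_le_iff₀ (pow_pos hR0 n)] at this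
    exact this
  have hG1 : (1:ℝ) ≤ G := by
    obtain ⟨u, hu⟩ := hUne
    have := hG 0 u hu
    rw [pow_zero, div_one] at this
    rw [← hS0 u]
    exact this
  have hG0 : (0:ℝ) ≤ G := le_trans zero_le_one hG1
  -- key induction
  have key : ∀ n x, S n x ≤ T n x + G * ∑ k ∈ Finset.range n, T k x * R ^ (n - 1 - k) := by
    intro n
    induction n with
    | zero =>
      intro x
      simp [hS0, hT0]
    | succ n ih =>
      intro x
      -- split the one-step sum over U / not U
      have hfs : Summable fun z => P x z * S n z :=
        Summable.of_nonneg_of_le (fun z => mul_nonneg (hP0 x z) (hSnn n z))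
          (fun z => by
            calc P x z * S n z ≤ P x z * 1 :=
                  mul_le_mul_of_nonneg_left (hSle1 n z) (hP0 x z)
              _ = P x z := mul_one _)
          (hPsum x)
      have hf1 : Summable fun z => if z ∈ U then P x z * S n z else 0 :=
        Summable.of_nonneg_of_le
          (fun z => by split
                       · exact mul_nonneg (hP0 x z) (hSnn n z)
                       · exact le_rfl)
          (fun z => by split
                       · exact le_rfl
                       · exact mul_nonneg (hP0 x z) (hSnn n z))
          hfs
      have hf2 : Summable fun z => Q x z * S n z :=
        Summable.of_nonneg_of_le (fun z => mul_nonneg (hQ0 x z) (hSnn n z))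
          (fun z => mul_le_mul_of_nonneg_right (hQle x z) (hSnn n z)) hfs
      have hsplit : S (n+1) x =
          (∑' z, if z ∈ U then P x z * S n z else 0) + ∑' z, Q x z * S n z := by
        rw [hSsucc n x, ← Summable.tsum_add hf1 hf2]
        congr 1; ext z
        by_cases hz : z ∈ U
        · simp [hQdef, hz]
        · simp [hQdef, hz]
      -- part 1 bound
      have hpart1 : (∑' z, if z ∈ U then P x z * S n z else 0) ≤ G * R ^ n := by
        rw [tsum_eq_sum (s := U) (fun b hb => if_neg hb)]
        calc (∑ z ∈ U, if z ∈ U then P x z * S n z else 0)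
            = ∑ z ∈ U, P x z * S n z :=
              Finset.sum_congr rfl fun z hz => if_pos hz
          _ ≤ ∑ z ∈ U, P x z * (G * R ^ n) :=
              Finset.sum_le_sum fun z hz =>
                mul_le_mul_of_nonneg_left (hGR n z hz) (hP0 x z)
          _ = (∑ z ∈ U, P x z) * (G * R ^ n) := by rw [← Finset.sum_mul]
          _ ≤ 1 * (G * R ^ n) := by
              apply mul_le_mul_of_nonneg_right _ (mul_nonneg hG0 (pow_pos hR0 n).le)
              exact le_trans (Summable.sum_le_tsum U (fun b _ => hP0 x b) (hPsum x)) (hP1 x)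
          _ = G * R ^ n := one_mul _
      -- part 2 bound
      have hbnd : ∀ z, S n z ≤ T n z + G * ∑ k ∈ Finset.range n, T k z * R ^ (n - 1 - k) :=
        ih
      have hrsum_le : ∀ z, (∑ k ∈ Finset.range n, T k z * R ^ (n - 1 - k)) ≤ (n : ℝ) := by
        intro z
        have h2 : ∀ k ∈ Finset.range n, T k z * R ^ (n - 1 - k) ≤ 1 := by
          intro k _
          have := mul_le_mul (hTle1 k z) (pow_le_one₀ hR0.le hR1 (n := n - 1 - k))
            (pow_pos hR0 _).le zero_le_one
          simpa using this
        calc (∑ k ∈ Finset.range n, T k z * R ^ (n - 1 - k)) ≤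
              ∑ k ∈ Finset.range n, (1 : ℝ) := Finset.sum_le_sum h2
          _ = (n : ℝ) := by simp
      have hrhs_sum : Summable fun z =>
          Q x z * (T n z + G * ∑ k ∈ Finset.range n, T k z * R ^ (n - 1 - k)) := by
        apply Summable.of_nonneg_of_le
          (fun z => mul_nonneg (hQ0 x z) (le_trans (hSnn n z) (hbnd z)))
          (fun z => ?_) ((hQsum x).mul_right (1 + G * n))
        apply mul_le_mul_of_nonneg_left _ (hQ0 x z)
        exact add_le_add (hTle1 n z) (mul_le_mul_of_nonneg_left (hrsum_le z) hG0)
      have hpart2 : (∑' z, Q x z * S n z) ≤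
          T (n+1) x + G * ∑ k ∈ Finset.range n, T (k+1) x * R ^ (n - 1 - k) := by
        have step1 : (∑' z, Q x z * S n z) ≤
            ∑' z, Q x z * (T n z + G * ∑ k ∈ Finset.range n, T k z * R ^ (n - 1 - k)) :=
          Summable.tsum_le_tsum (fun z => mul_le_mul_of_nonneg_left (hbnd z) (hQ0 x z)) hf2 hrhs_sum
        have hq1 : Summable fun z => Q x z * T n z :=
          Summable.of_nonneg_of_le (fun z => mul_nonneg (hQ0 x z) (hTnn n z))
            (fun z => by
              calc Q x z * T n z ≤ Q x z * 1 :=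
                    mul_le_mul_of_nonneg_left (hTle1 n z) (hQ0 x z)
                _ = Q x z := mul_one _) (hQsum x)
        have hqk : ∀ k : ℕ, Summable fun z => Q x z * T k z := by
          intro k
          exact Summable.of_nonneg_of_le (fun z => mul_nonneg (hQ0 x z) (hTnn k z))
            (fun z => by
              calc Q x z * T k z ≤ Q x z * 1 :=
                    mul_le_mul_of_nonneg_left (hTle1 k z) (hQ0 x z)
                _ = Q x z := mul_one _) (hQsum x)
        have hq2 : Summable fun z =>
            Q x z * (G * ∑ k ∈ Finset.range n, T k z * R ^ (n - 1 - k)) :=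
          Summable.of_nonneg_of_le
            (fun z => mul_nonneg (hQ0 x z) (mul_nonneg hG0
              (Finset.sum_nonneg fun k _ =>
                mul_nonneg (hTnn k z) (pow_pos hR0 _).le)))
            (fun z => mul_le_mul_of_nonneg_left
              (le_add_of_nonneg_left (hTnn n z)) (hQ0 x z))
            hrhs_sum
        have step2 : (∑' z, Q x z * (T n z + G * ∑ k ∈ Finset.range n, T k z * R ^ (n - 1 - k)))
            = (∑' z, Q x z * T n z) +
              ∑' z, Q x z * (G * ∑ k ∈ Finset.range n, T k z * R ^ (n - 1 - k)) := by
          rw [← Summable.tsum_add hq1 hq2]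
          congr 1; ext z; ring
        have step3 : (∑' z, Q x z * (G * ∑ k ∈ Finset.range n, T k z * R ^ (n - 1 - k)))
            = G * ∑ k ∈ Finset.range n, T (k+1) x * R ^ (n - 1 - k) := by
          have e1 : ∀ z, Q x z * (G * ∑ k ∈ Finset.range n, T k z * R ^ (n - 1 - k))
              = ∑ k ∈ Finset.range n, (G * R ^ (n - 1 - k)) * (Q x z * T k z) := by
            intro z
            rw [Finset.mul_sum, Finset.mul_sum]
            congr 1; ext k; ring
          calc (∑' z, Q x z * (G * ∑ k ∈ Finset.range n, T k z * R ^ (n - 1 - k)))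
              = ∑' z, ∑ k ∈ Finset.range n, (G * R ^ (n - 1 - k)) * (Q x z * T k z) := by
                congr 1; ext z; exact e1 z
            _ = ∑ k ∈ Finset.range n, ∑' z, (G * R ^ (n - 1 - k)) * (Q x z * T k z) :=
                Summable.tsum_finsetSum fun k _ => ((hqk k).mul_left _)
            _ = ∑ k ∈ Finset.range n, (G * R ^ (n - 1 - k)) * ∑' z, Q x z * T k z :=
                Finset.sum_congr rfl fun k _ => tsum_mul_left
            _ = ∑ k ∈ Finset.range n, (G * R ^ (n - 1 - k)) * T (k+1) x :=
                Finset.sum_congr rfl fun k _ => by rw [← hTsucc k x]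
            _ = G * ∑ k ∈ Finset.range n, T (k+1) x * R ^ (n - 1 - k) := by
                rw [Finset.mul_sum]
                congr 1; ext k; ring
        calc (∑' z, Q x z * S n z)
            ≤ (∑' z, Q x z * T n z) +
              ∑' z, Q x z * (G * ∑ k ∈ Finset.range n, T k z * R ^ (n - 1 - k)) := by
              rw [← step2]; exact step1
          _ = T (n+1) x + G * ∑ k ∈ Finset.range n, T (k+1) x * R ^ (n - 1 - k) := by
              rw [← hTsucc n x, step3]
      -- combine
      have hsum_eq : (∑ k ∈ Finset.range (n+1), T k x * R ^ (n + 1 - 1 - k))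
          = (∑ k ∈ Finset.range n, T (k+1) x * R ^ (n - 1 - k)) + R ^ n := by
        rw [Finset.sum_range_succ']
        congr 1
        · apply Finset.sum_congr rfl
          intro k hk
          congr 2
          omega
        · rw [hT0, one_mul]
          norm_num
      have hcomb : S (n+1) x ≤ (G * R ^ n) +
          (T (n+1) x + G * ∑ k ∈ Finset.range n, T (k+1) x * R ^ (n - 1 - k)) := by
        rw [hsplit]; exact add_le_add hpart1 hpart2
      have hfin : (G * R ^ n) +
          (T (n+1) x + G * ∑ k ∈ Finset.range n, T (k+1) x * R ^ (n - 1 - k))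
          = T (n+1) x + G * ∑ k ∈ Finset.range (n+1), T k x * R ^ (n + 1 - 1 - k) := by
        rw [hsum_eq]; ring
      exact hfin ▸ hcomb
  -- geometric bound
  have geom : ∀ n : ℕ, (∑ k ∈ Finset.range n, ρ ^ k * R ^ (n - 1 - k)) ≤ R ^ n / (R - ρ) := by
    intro n
    rcases Nat.eq_zero_or_pos n with h | h
    · subst h
      simp only [Finset.range_zero, Finset.sum_empty, pow_zero]
      exact div_nonneg zero_le_one hRρ.le
    · have e1 : ∀ k ∈ Finset.range n, ρ ^ k * R ^ (n - 1 - k) = R ^ (n-1) * (ρ / R) ^ k := by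
        intro k hk
        rw [Finset.mem_range] at hk
        have hkn : k ≤ n - 1 := by omega
        have : R ^ (n-1) = R ^ (n - 1 - k) * R ^ k := by
          rw [← pow_add]
          congr 1
          omega
        rw [this, div_pow]
        field_simp
      rw [Finset.sum_congr rfl e1, ← Finset.mul_sum]
      have hρR' : ρ / R < 1 := (div_lt_one hR0).2 hρR
      have hgs : (∑ k ∈ Finset.range n, (ρ / R) ^ k) ≤ (1 - ρ / R)⁻¹ := by
        apply le_trans (Summable.sum_le_tsum (Finset.range n)
          (fun k _ => pow_nonneg (div_nonneg hρ0.le hR0.le) k)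
          (summable_geometric_of_lt_one (div_nonneg hρ0.le hR0.le) hρR'))
        rw [tsum_geometric_of_lt_one (div_nonneg hρ0.le hR0.le) hρR']
      calc R ^ (n-1) * ∑ k ∈ Finset.range n, (ρ / R) ^ k
          ≤ R ^ (n-1) * (1 - ρ / R)⁻¹ :=
            mul_le_mul_of_nonneg_left hgs (pow_pos hR0 _).le
        _ = R ^ n / (R - ρ) := by
            have h1 : (1 - ρ / R)⁻¹ = R / (R - ρ) := by
              rw [eq_div_iff hRρ.ne']
              field_simp
            rw [h1]
            have : R ^ (n-1) * R = R ^ n := by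
              rw [← pow_succ]
              congr 1
              omega
            rw [div_eq_mul_inv, div_eq_mul_inv, ← mul_assoc, this]
  -- pointwise bound on renormalized survival
  have hfg : ∀ n : ℕ, ∀ x, S n x / R ^ n ≤ (ρ / R) ^ n + G / (R - ρ) := by
    intro n x
    have h1 : S n x ≤ ρ ^ n + G * (R ^ n / (R - ρ)) := by
      calc S n x ≤ T n x + G * ∑ k ∈ Finset.range n, T k x * R ^ (n - 1 - k) := key n x
        _ ≤ ρ ^ n + G * ∑ k ∈ Finset.range n, ρ ^ k * R ^ (n - 1 - k) := by
            apply add_le_add (hTρ n x)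
            apply mul_le_mul_of_nonneg_left _ hG0
            exact Finset.sum_le_sum fun k _ =>
              mul_le_mul_of_nonneg_right (hTρ k x) (pow_pos hR0 _).le
        _ ≤ ρ ^ n + G * (R ^ n / (R - ρ)) :=
            add_le_add_right (mul_le_mul_of_nonneg_left (geom n) hG0) _
    have hRn : (R:ℝ) ^ n ≠ 0 := (pow_pos hR0 n).ne'
    have h2 : (ρ ^ n + G * (R ^ n / (R - ρ))) / R ^ n = (ρ / R) ^ n + G / (R - ρ) := by
      rw [add_div, div_pow, mul_div_assoc]
      congr 1
      rw [div_div, mul_comm (R - ρ) (R ^ n), ← div_div, div_self hRn, one_div, div_eq_mul_inv]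
    calc S n x / R ^ n ≤ (ρ ^ n + G * (R ^ n / (R - ρ))) / R ^ n := by
          exact div_le_div_of_nonneg_right h1 ((pow_pos hR0 n).le)
      _ = (ρ / R) ^ n + G / (R - ρ) := h2
  intro x
  have hlim : Tendsto (fun n : ℕ => (ρ / R) ^ n + G / (R - ρ)) atTop
      (𝓝 (0 + G / (R - ρ))) :=
    (tendsto_pow_atTop_nhds_zero_of_lt_one (div_nonneg hρ0.le hR0.le)
      ((div_lt_one hR0).2 hρR)).add tendsto_const_nhds
  have hcob : IsCoboundedUnder (· ≤ ·) atTop (fun n : ℕ => S n x / R ^ n) := by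
    apply Filter.IsBoundedUnder.isCoboundedUnder_le
    exact ⟨0, Filter.eventually_map.2 (Eventually.of_forall fun n =>
      div_nonneg (hSnn n x) (pow_pos hR0 n).le)⟩
  calc Filter.limsup (fun n : ℕ => S n x / R ^ n) atTop
      ≤ Filter.limsup (fun n : ℕ => (ρ / R) ^ n + G / (R - ρ)) atTop :=
        limsup_le_limsup (Eventually.of_forall fun n => hfg n x) hcob
          hlim.isBoundedUnder_le
    _ = 0 + G / (R - ρ) := hlim.limsup_eq
    _ = G / (R - ρ) := zero_add _
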